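/- arXiv:2409.05671 — 2 statements merged into one kernel-verified Lean document; each statement's English description precedes it below -/
import Mathlib

section
/- Let p, q, x ∈ 𝕂ⁿ. Then d(x,p) ≤ d(x,q) if and only if (1 − x⋅p)/√(1 − ‖p‖²) ≤ (1 − x⋅q)/√(1 − ‖q‖²). Consequently, each hyperbolic Voronoi cell in the Klein–Beltrami model is the intersection of 𝕂ⁿ with finitely many affine (Euclidean) half-spaces, one per competing site. -/
/-- Lorentzian inner ℝ product in homogeneous coordinates: `⟨u,v⟩ = u⋅v − 1`. -/
noncomputable def lorentz {n : ℕ} (u v : EuclideanSpace ℝ (Fin n)) : ℝ :=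
  (inner ℝ u v : ℝ) - 1

/-- Inverse hyperbolic cosine: `arcosh t = log (t + √(t² − 1))`. -/
noncomputable def arcosh (t : ℝ) : ℝ := Real.log (t + Real.sqrt (t ^ 2 - 1))

/-- The hyperbolic distance on the Klein–Beltrami ball. -/
noncomputable def kleinDist {n : ℕ} (x y : EuclideanSpace ℝ (Fin n)) : ℝ :=
  arcosh (-(lorentz x y) / Real.sqrt (lorentz x x * lorentz y y))

lemma arcosh_strictMonoOn : StrictMonoOn arcosh (Set.Ici 1) := by
  intro a ha b hb hab
  simp only [Set.mem_Ici] at ha hb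
  unfold arcosh
  apply Real.log_lt_log
  · have := Real.sqrt_nonneg (a ^ 2 - 1)
    linarith
  · have h : Real.sqrt (a ^ 2 - 1) ≤ Real.sqrt (b ^ 2 - 1) := by
      apply Real.sqrt_le_sqrt; nlinarith
    linarith

lemma arcosh_le_iff {a b : ℝ} (ha : 1 ≤ a) (hb : 1 ≤ b) :
    arcosh a ≤ arcosh b ↔ a ≤ b :=
  arcosh_strictMonoOn.le_iff_le ha hb

lemma sqrt_prod_le {n : ℕ} (x y : EuclideanSpace ℝ (Fin n)) (hx : ‖x‖ < 1) (hy : ‖y‖ < 1) :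
    Real.sqrt (1 - ‖x‖ ^ 2) * Real.sqrt (1 - ‖y‖ ^ 2) ≤ 1 - (inner ℝ x y : ℝ) := by
  have h1 : (inner ℝ x y : ℝ) ≤ ‖x‖ * ‖y‖ := real_inner_le_norm x y
  have hx0 : 0 ≤ ‖x‖ := norm_nonneg x
  have hy0 : 0 ≤ ‖y‖ := norm_nonneg y
  have h2 : Real.sqrt (1 - ‖x‖ ^ 2) * Real.sqrt (1 - ‖y‖ ^ 2)
      = Real.sqrt ((1 - ‖x‖ ^ 2) * (1 - ‖y‖ ^ 2)) := by
    rw [Real.sqrt_mul (by nlinarith)]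
  have h3 : (1 - ‖x‖ ^ 2) * (1 - ‖y‖ ^ 2) ≤ (1 - ‖x‖ * ‖y‖) ^ 2 := by nlinarith [sq_nonneg (‖x‖ - ‖y‖)]
  have h4 : Real.sqrt ((1 - ‖x‖ ^ 2) * (1 - ‖y‖ ^ 2)) ≤ 1 - ‖x‖ * ‖y‖ := by
    calc Real.sqrt ((1 - ‖x‖ ^ 2) * (1 - ‖y‖ ^ 2)) ≤ Real.sqrt ((1 - ‖x‖ * ‖y‖) ^ 2) :=
          Real.sqrt_le_sqrt h3
      _ = 1 - ‖x‖ * ‖y‖ := Real.sqrt_sq (by nlinarith)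
  rw [h2]
  linarith

lemma kleinDist_eq {n : ℕ} (x y : EuclideanSpace ℝ (Fin n)) (hx : ‖x‖ < 1) :
    kleinDist x y = arcosh ((1 - (inner ℝ x y : ℝ)) /
      (Real.sqrt (1 - ‖x‖ ^ 2) * Real.sqrt (1 - ‖y‖ ^ 2))) := by
  unfold kleinDist lorentz
  rw [real_inner_self_eq_norm_sq x, real_inner_self_eq_norm_sq y]
  congr 1
  rw [show (‖x‖ ^ 2 - 1) * (‖y‖ ^ 2 - 1) = (1 - ‖x‖ ^ 2) * (1 - ‖y‖ ^ 2) by ring,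
    Real.sqrt_mul (by nlinarith [norm_nonneg x])]
  ring_nf

/-- Comparison of hyperbolic distances in the Klein–Beltrami model is an affine condition:
`d(x,p) ≤ d(x,q) ↔ (1 − x⋅p)/√(1−‖p‖²) ≤ (1 − x⋅q)/√(1−‖q‖²)`.  Consequently, each
hyperbolic Voronoi cell is the intersection of the ball with one affine half-space per
competing site. -/
theorem kleinDist_le_iff_and_voronoi_halfspaces {n : ℕ} :
    (∀ p q x : EuclideanSpace ℝ (Fin n), ‖p‖ < 1 → ‖q‖ < 1 → ‖x‖ < 1 →
      (kleinDist x p ≤ kleinDist x q ↔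
        (1 - (inner ℝ x p : ℝ)) / Real.sqrt (1 - ‖p‖ ^ 2)
          ≤ (1 - (inner ℝ x q : ℝ)) / Real.sqrt (1 - ‖q‖ ^ 2))) ∧
    (∀ P : Finset (EuclideanSpace ℝ (Fin n)), (∀ r ∈ P, ‖r‖ < 1) →
      ∀ p ∈ P,
        {x : EuclideanSpace ℝ (Fin n) | ‖x‖ < 1 ∧ ∀ q ∈ P, kleinDist x p ≤ kleinDist x q}
          = {x : EuclideanSpace ℝ (Fin n) | ‖x‖ < 1 ∧ ∀ q ∈ P,
              (inner ℝ ((Real.sqrt (1 - ‖p‖ ^ 2))⁻¹ • p - (Real.sqrt (1 - ‖q‖ ^ 2))⁻¹ • q) x : ℝ)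
                ≥ (Real.sqrt (1 - ‖p‖ ^ 2))⁻¹ - (Real.sqrt (1 - ‖q‖ ^ 2))⁻¹}) := by
  have main : ∀ p q x : EuclideanSpace ℝ (Fin n), ‖p‖ < 1 → ‖q‖ < 1 → ‖x‖ < 1 →
      (kleinDist x p ≤ kleinDist x q ↔
        (1 - (inner ℝ x p : ℝ)) / Real.sqrt (1 - ‖p‖ ^ 2)
          ≤ (1 - (inner ℝ x q : ℝ)) / Real.sqrt (1 - ‖q‖ ^ 2)) := by
    intro p q x hp hq hx
    have hxp : 0 < Real.sqrt (1 - ‖x‖ ^ 2) :=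
      Real.sqrt_pos.mpr (by nlinarith [norm_nonneg x])
    have hsp : 0 < Real.sqrt (1 - ‖p‖ ^ 2) :=
      Real.sqrt_pos.mpr (by nlinarith [norm_nonneg p])
    have hsq : 0 < Real.sqrt (1 - ‖q‖ ^ 2) :=
      Real.sqrt_pos.mpr (by nlinarith [norm_nonneg q])
    have hap : 1 ≤ (1 - (inner ℝ x p : ℝ)) /
        (Real.sqrt (1 - ‖x‖ ^ 2) * Real.sqrt (1 - ‖p‖ ^ 2)) := by
      rw [le_div_iff₀ (by positivity), one_mul]
      exact sqrt_prod_le x p hx hp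
    have haq : 1 ≤ (1 - (inner ℝ x q : ℝ)) /
        (Real.sqrt (1 - ‖x‖ ^ 2) * Real.sqrt (1 - ‖q‖ ^ 2)) := by
      rw [le_div_iff₀ (by positivity), one_mul]
      exact sqrt_prod_le x q hx hq
    rw [kleinDist_eq x p hx, kleinDist_eq x q hx, arcosh_le_iff hap haq]
    rw [div_le_div_iff₀ (by positivity) (by positivity), div_le_div_iff₀ hsp hsq]
    constructor <;> intro h <;> nlinarith
  refine ⟨main, ?_⟩
  intro P hP p hpP
  ext x
  simp only [Set.mem_setOf_eq]
  have hsp : 0 < Real.sqrt (1 - ‖p‖ ^ 2) :=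
    Real.sqrt_pos.mpr (by nlinarith [norm_nonneg p, hP p hpP])
  constructor
  · rintro ⟨hx, h⟩
    refine ⟨hx, fun q hqP => ?_⟩
    have key := (main p q x (hP p hpP) (hP q hqP) hx).mp (h q hqP)
    have hsq : 0 < Real.sqrt (1 - ‖q‖ ^ 2) :=
      Real.sqrt_pos.mpr (by nlinarith [norm_nonneg q, hP q hqP])
    rw [inner_sub_left, real_inner_smul_left, real_inner_smul_left,
      real_inner_comm x p, real_inner_comm x q]
    rw [div_le_div_iff₀ hsp hsq] at key
    rw [ge_iff_le, ← sub_nonneg]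
    have e : (Real.sqrt (1 - ‖p‖ ^ 2))⁻¹ * (inner ℝ x p : ℝ) -
        (Real.sqrt (1 - ‖q‖ ^ 2))⁻¹ * (inner ℝ x q : ℝ) -
        ((Real.sqrt (1 - ‖p‖ ^ 2))⁻¹ - (Real.sqrt (1 - ‖q‖ ^ 2))⁻¹)
        = ((1 - (inner ℝ x q : ℝ)) * Real.sqrt (1 - ‖p‖ ^ 2)
            - (1 - (inner ℝ x p : ℝ)) * Real.sqrt (1 - ‖q‖ ^ 2))
          / (Real.sqrt (1 - ‖p‖ ^ 2) * Real.sqrt (1 - ‖q‖ ^ 2)) := by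
      field_simp
      ring
    rw [e]
    apply div_nonneg (by linarith) (by positivity)
  · rintro ⟨hx, h⟩
    refine ⟨hx, fun q hqP => ?_⟩
    have hq := h q hqP
    have hsq : 0 < Real.sqrt (1 - ‖q‖ ^ 2) :=
      Real.sqrt_pos.mpr (by nlinarith [norm_nonneg q, hP q hqP])
    rw [inner_sub_left, real_inner_smul_left, real_inner_smul_left,
      real_inner_comm x p, real_inner_comm x q] at hq
    apply (main p q x (hP p hpP) (hP q hqP) hx).mpr
    rw [div_le_div_iff₀ hsp hsq]
    have hq' : 0 ≤ (Real.sqrt (1 - ‖p‖ ^ 2))⁻¹ * (inner ℝ x p : ℝ) -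
        (Real.sqrt (1 - ‖q‖ ^ 2))⁻¹ * (inner ℝ x q : ℝ) -
        ((Real.sqrt (1 - ‖p‖ ^ 2))⁻¹ - (Real.sqrt (1 - ‖q‖ ^ 2))⁻¹) := by linarith
    have e : (Real.sqrt (1 - ‖p‖ ^ 2))⁻¹ * (inner ℝ x p : ℝ) -
        (Real.sqrt (1 - ‖q‖ ^ 2))⁻¹ * (inner ℝ x q : ℝ) -
        ((Real.sqrt (1 - ‖p‖ ^ 2))⁻¹ - (Real.sqrt (1 - ‖q‖ ^ 2))⁻¹)
        = ((1 - (inner ℝ x q : ℝ)) * Real.sqrt (1 - ‖p‖ ^ 2)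
            - (1 - (inner ℝ x p : ℝ)) * Real.sqrt (1 - ‖q‖ ^ 2))
          / (Real.sqrt (1 - ‖p‖ ^ 2) * Real.sqrt (1 - ‖q‖ ^ 2)) := by
      field_simp
      ring
    rw [e] at hq'
    rcases div_nonneg_iff.mp hq' with ⟨h1, _⟩ | ⟨_, h2⟩
    · linarith
    · nlinarith
end

section
/- Let p, q ∈ 𝕂ⁿ with p ≠ q. Then the hyperbolic bisector {x ∈ 𝕂ⁿ : d(x,p) = d(x,q)} equals the intersection of 𝕂ⁿ with the affine hyperplane {x ∈ ℝⁿ : a⋅x = b}, where a = p/√(1 − ‖p‖²) − q/√(1 − ‖q‖²) and b = 1/√(1 − ‖p‖²) − 1/√(1 − ‖q‖²); moreover a ≠ 0 or b ≠ 0, so this set is a genuine hyperplane slice of the ball. -/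
lemma arcosh_inj {a b : ℝ} (ha : 1 ≤ a) (hb : 1 ≤ b) (h : arcosh a = arcosh b) : a = b := by
  unfold arcosh at h
  have ha' : (0:ℝ) ≤ a ^ 2 - 1 := by nlinarith
  have hb' : (0:ℝ) ≤ b ^ 2 - 1 := by nlinarith
  have hsa := Real.sqrt_nonneg (a ^ 2 - 1)
  have hsb := Real.sqrt_nonneg (b ^ 2 - 1)
  have hpa : (0:ℝ) < a + Real.sqrt (a ^ 2 - 1) := by linarith
  have hpb : (0:ℝ) < b + Real.sqrt (b ^ 2 - 1) := by linarith
  have h1 : a + Real.sqrt (a ^ 2 - 1) = b + Real.sqrt (b ^ 2 - 1) := by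
    have := congrArg Real.exp h
    rwa [Real.exp_log hpa, Real.exp_log hpb] at this
  nlinarith [Real.sq_sqrt ha', Real.sq_sqrt hb']

lemma frac_iff {sx sp sq a b : ℝ} (hx : 0 < sx) (hp : 0 < sp) (hq : 0 < sq) :
    (1 - a)/(sx*sp) = (1-b)/(sx*sq) ↔ sp⁻¹*a - sq⁻¹*b = sp⁻¹ - sq⁻¹ := by
  rw [div_eq_div_iff (by positivity) (by positivity)]
  have e1 : sp * sp⁻¹ = 1 := mul_inv_cancel₀ hp.ne'
  have e2 : sq * sq⁻¹ = 1 := mul_inv_cancel₀ hq.ne'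
  constructor
  · intro h
    have h' : (1-a)*sq = (1-b)*sp := mul_left_cancel₀ hx.ne' (by linear_combination h)
    linear_combination (-(sp⁻¹*sq⁻¹)) * h' + ((b-1)*sq⁻¹) * e1 + ((1-a)*sp⁻¹) * e2
  · intro h
    have h' : (1-a)*sq = (1-b)*sp := by
      linear_combination (-(sp*sq)) * h + ((a-1)*sq) * e1 + ((1-b)*sp) * e2
    linear_combination sx * h'


lemma klein_arg {n : ℕ} (x p : EuclideanSpace ℝ (Fin n)) (hx : ‖x‖ < 1) (hp : ‖p‖ < 1) :
    kleinDist x p = arcosh ((1 - (inner ℝ x p : ℝ)) /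
      (Real.sqrt (1 - ‖x‖ ^ 2) * Real.sqrt (1 - ‖p‖ ^ 2))) ∧
    1 ≤ (1 - (inner ℝ x p : ℝ)) / (Real.sqrt (1 - ‖x‖ ^ 2) * Real.sqrt (1 - ‖p‖ ^ 2)) := by
  have hx2 : (0:ℝ) ≤ 1 - ‖x‖ ^ 2 := by nlinarith [norm_nonneg x]
  have hp2 : (0:ℝ) ≤ 1 - ‖p‖ ^ 2 := by nlinarith [norm_nonneg p]
  have hx2' : (0:ℝ) < 1 - ‖x‖ ^ 2 := by nlinarith [norm_nonneg x]
  have hp2' : (0:ℝ) < 1 - ‖p‖ ^ 2 := by nlinarith [norm_nonneg p]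
  have hip : (inner ℝ x p : ℝ) ≤ ‖x‖ * ‖p‖ := real_inner_le_norm x p
  have hkey : Real.sqrt (1 - ‖x‖ ^ 2) * Real.sqrt (1 - ‖p‖ ^ 2) ≤ 1 - (inner ℝ x p : ℝ) := by
    have h1 : (1 - ‖x‖ ^ 2) * (1 - ‖p‖ ^ 2) ≤ (1 - (inner ℝ x p : ℝ)) ^ 2 := by
      nlinarith [norm_nonneg x, norm_nonneg p, mul_nonneg (norm_nonneg x) (norm_nonneg p),
        sq_nonneg (‖x‖ - ‖p‖), sq_nonneg (‖x‖ * ‖p‖ - (inner ℝ x p : ℝ))]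
    calc Real.sqrt (1 - ‖x‖ ^ 2) * Real.sqrt (1 - ‖p‖ ^ 2)
        = Real.sqrt ((1 - ‖x‖ ^ 2) * (1 - ‖p‖ ^ 2)) := (Real.sqrt_mul hx2 _).symm
      _ ≤ Real.sqrt ((1 - (inner ℝ x p : ℝ)) ^ 2) := Real.sqrt_le_sqrt h1
      _ = 1 - (inner ℝ x p : ℝ) := by
          rw [Real.sqrt_sq (by nlinarith [mul_nonneg (norm_nonneg x) (norm_nonneg p)])]
  have hpos : (0:ℝ) < Real.sqrt (1 - ‖x‖ ^ 2) * Real.sqrt (1 - ‖p‖ ^ 2) :=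
    mul_pos (Real.sqrt_pos.mpr hx2') (Real.sqrt_pos.mpr hp2')
  constructor
  · unfold kleinDist lorentz
    congr 1
    rw [real_inner_self_eq_norm_sq, real_inner_self_eq_norm_sq]
    have : (‖x‖ ^ 2 - 1) * (‖p‖ ^ 2 - 1) = (1 - ‖x‖ ^ 2) * (1 - ‖p‖ ^ 2) := by ring
    rw [this, Real.sqrt_mul hx2]
    ring_nf
  · rw [le_div_iff₀ hpos]
    linarith

/-- The hyperbolic bisector of two distinct points `p ≠ q` of the Klein–Beltrami ball is the
intersection of the ball with the affine hyperplane `{x : a⋅x = b}`, where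
`a = p/√(1−‖p‖²) − q/√(1−‖q‖²)` and `b = 1/√(1−‖p‖²) − 1/√(1−‖q‖²)`; moreover `a ≠ 0` or
`b ≠ 0`, so this is a genuine hyperplane slice of the ball. -/
theorem klein_bisector_is_hyperplane {n : ℕ} (p q : EuclideanSpace ℝ (Fin n))
    (hp : ‖p‖ < 1) (hq : ‖q‖ < 1) (hpq : p ≠ q) :
    ({x : EuclideanSpace ℝ (Fin n) | ‖x‖ < 1 ∧ kleinDist x p = kleinDist x q}
        = {x : EuclideanSpace ℝ (Fin n) | ‖x‖ < 1 ∧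
            (inner ℝ ((Real.sqrt (1 - ‖p‖ ^ 2))⁻¹ • p - (Real.sqrt (1 - ‖q‖ ^ 2))⁻¹ • q) x : ℝ)
              = (Real.sqrt (1 - ‖p‖ ^ 2))⁻¹ - (Real.sqrt (1 - ‖q‖ ^ 2))⁻¹}) ∧
      ((Real.sqrt (1 - ‖p‖ ^ 2))⁻¹ • p - (Real.sqrt (1 - ‖q‖ ^ 2))⁻¹ • q ≠ 0 ∨
        (Real.sqrt (1 - ‖p‖ ^ 2))⁻¹ - (Real.sqrt (1 - ‖q‖ ^ 2))⁻¹ ≠ 0) := by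
  have hp2 : (0:ℝ) < 1 - ‖p‖ ^ 2 := by nlinarith [norm_nonneg p]
  have hq2 : (0:ℝ) < 1 - ‖q‖ ^ 2 := by nlinarith [norm_nonneg q]
  set sp := Real.sqrt (1 - ‖p‖ ^ 2) with hsp
  set sq := Real.sqrt (1 - ‖q‖ ^ 2) with hsq
  have hsp0 : 0 < sp := Real.sqrt_pos.mpr hp2
  have hsq0 : 0 < sq := Real.sqrt_pos.mpr hq2
  constructor
  · ext x
    simp only [Set.mem_setOf_eq]
    constructor
    · rintro ⟨hx, hd⟩
      refine ⟨hx, ?_⟩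
      have hsx0 : 0 < Real.sqrt (1 - ‖x‖ ^ 2) := Real.sqrt_pos.mpr (by nlinarith [norm_nonneg x])
      obtain ⟨hep, hlp⟩ := klein_arg x p hx hp
      obtain ⟨heq, hlq⟩ := klein_arg x q hx hq
      rw [hep, heq] at hd
      have heq2 := arcosh_inj hlp hlq hd
      rw [inner_sub_left, real_inner_smul_left, real_inner_smul_left,
        real_inner_comm x p, real_inner_comm x q]
      exact (frac_iff hsx0 hsp0 hsq0).mp heq2
    · rintro ⟨hx, hd⟩
      refine ⟨hx, ?_⟩
      have hsx0 : 0 < Real.sqrt (1 - ‖x‖ ^ 2) := Real.sqrt_pos.mpr (by nlinarith [norm_nonneg x])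
      obtain ⟨hep, hlp⟩ := klein_arg x p hx hp
      obtain ⟨heq, hlq⟩ := klein_arg x q hx hq
      rw [hep, heq]
      rw [inner_sub_left, real_inner_smul_left, real_inner_smul_left,
        real_inner_comm x p, real_inner_comm x q] at hd
      exact congrArg arcosh ((frac_iff hsx0 hsp0 hsq0).mpr hd)
  · by_contra h
    push_neg at h
    obtain ⟨ha, hb⟩ := h
    have hspq : sp = sq := by
      have : sp⁻¹ = sq⁻¹ := by linarith [sub_eq_zero.mp hb]
      exact inv_injective this
    apply hpq
    have := sub_eq_zero.mp ha
    rw [hspq] at this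
    exact smul_right_injective _ (by positivity) this
end
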